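/- Fix r ∈ (0,1) and q ∈ ℝ, and let F and C be as defined. Let I ⊆ ℝ be an open interval and g : I → ℝ a twice differentiable function with g(η) > 0 for all η ∈ I, satisfying (g'(η))² = F(g(η), q) and g''(η) = (1/2)·∂F/∂g(g(η), q) for all η ∈ I. Then the function W(η) = 1 − g(η)^r satisfies (1 − W)W'' = ((1 − r)/r)(W')² + r(qW − W³) on I. -/

import Mathlib

/-- The integration constant `C(q)` (for fixed `r`). -/
noncomputable def Ccoef (r q : ℝ) : ℝ := r * (3 * r ^ 2 - q * (2 + r)) / ((1 - r) * (4 - r ^ 2))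

/-- The right-hand side `F(g,q)` of the reduced first-order ODE (for fixed `r`),
with real powers `g ^ s = exp(s log g)` for `g > 0`. -/
noncomputable def Ffun (r q g : ℝ) : ℝ :=
  (1 - q) / (1 - r) * g ^ (2 - 2 * r) - 2 * (3 - q) / (2 - r) * g ^ (2 - r)
    + 3 * g ^ (2 : ℝ) - 2 / (2 + r) * g ^ (2 + r) - Ccoef r q

/-- If `g > 0` solves `(g')² = F(g,q)` and `g'' = (1/2)∂F/∂g(g,q)` on an
open interval `I`, then `W = 1 − g^r` solves `(1 − W)W'' = ((1−r)/r)(W')² + r(qW − W³)` on `I`. -/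
theorem gmKdV_W_equation_from_g
    (r q : ℝ) (hr : r ∈ Set.Ioo (0 : ℝ) 1)
    (a b : ℝ) (I : Set ℝ) (hI : I = Set.Ioo a b)
    (g : ℝ → ℝ) (g' g'' : ℝ → ℝ)
    (hgpos : ∀ η ∈ I, g η > 0)
    (hg' : ∀ η ∈ I, HasDerivAt g (g' η) η)
    (hg'' : ∀ η ∈ I, HasDerivAt g' (g'' η) η)
    (hODE1 : ∀ η ∈ I, (g' η) ^ 2 = Ffun r q (g η))
    (hODE2 : ∀ η ∈ I, g'' η = (1 / 2) * deriv (fun x => Ffun r q x) (g η))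
    (W : ℝ → ℝ) (hW : W = fun η => 1 - g η ^ r) :
    ∀ η ∈ I,
      (1 - W η) * deriv (deriv W) η =
        (1 - r) / r * (deriv W η) ^ 2 + r * (q * W η - (W η) ^ 3) := by
  intro η hη
  have hIopen : IsOpen I := hI ▸ isOpen_Ioo
  have hr0 : (0:ℝ) < r := hr.1
  have hr1 : r < 1 := hr.2
  have hx : 0 < g η := hgpos η hη
  -- first derivative of W on I
  have hWder : ∀ t ∈ I, HasDerivAt W (-(r * g t ^ (r-1) * g' t)) t := by
    intro t ht
    have h1 : HasDerivAt (fun s : ℝ => g s ^ r) (r * g t ^ (r-1) * g' t) t := by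
      have h := (Real.hasDerivAt_rpow_const (p := r)
        (Or.inl (hgpos t ht).ne')).comp t (hg' t ht)
      exact h
    have h2 := h1.const_sub 1
    rw [hW]
    convert h2 using 1
  have hderivW : ∀ t ∈ I, deriv W t = -(r * g t ^ (r-1) * g' t) :=
    fun t ht => (hWder t ht).deriv
  -- second derivative of W at η
  have hφder : HasDerivAt (fun t => -(r * g t ^ (r-1) * g' t))
      (-(r * ((r-1) * g η ^ (r-2) * g' η * g' η + g η ^ (r-1) * g'' η))) η := by
    have h1 : HasDerivAt (fun s : ℝ => g s ^ (r-1)) ((r-1) * g η ^ (r-2) * g' η) η := by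
      have h := (Real.hasDerivAt_rpow_const (p := r-1)
        (Or.inl hx.ne')).comp η (hg' η hη)
      rw [show r - 2 = r - 1 - 1 by ring]
      exact h
    have h2 := ((h1.mul (hg'' η hη)).const_mul r).neg
    have e : (fun t => -(r * g t ^ (r-1) * g' t)) = -fun y => r * ((fun s => g s ^ (r - 1)) * g') y := by
      funext t
      simp only [Pi.neg_apply, Pi.mul_apply]
      ring
    rw [e]
    exact h2
  have hW'' : deriv (deriv W) η =
      -(r * ((r-1) * g η ^ (r-2) * g' η * g' η + g η ^ (r-1) * g'' η)) := by
    have heq : deriv W =ᶠ[nhds η] (fun t => -(r * g t ^ (r-1) * g' t)) :=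
      Filter.eventuallyEq_of_mem (hIopen.mem_nhds hη) hderivW
    exact (hφder.congr_of_eventuallyEq heq).deriv
  -- derivative of Ffun at x = g η
  set x := g η with hxdef
  have hFder : HasDerivAt (fun y => Ffun r q y)
      ((1-q)/(1-r) * ((2-2*r) * x ^ (2-2*r-1)) - 2*(3-q)/(2-r) * ((2-r) * x ^ (2-r-1))
        + 3 * ((2:ℝ) * x ^ ((2:ℝ)-1)) - 2/(2+r) * ((2+r) * x ^ (2+r-1))) x := by
    unfold Ffun
    exact (((((Real.hasDerivAt_rpow_const (p := 2-2*r) (Or.inl hx.ne')).const_mul ((1-q)/(1-r))).sub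
      ((Real.hasDerivAt_rpow_const (p := 2-r) (Or.inl hx.ne')).const_mul (2*(3-q)/(2-r)))).add
      ((Real.hasDerivAt_rpow_const (p := (2:ℝ)) (Or.inl hx.ne')).const_mul 3)).sub
      ((Real.hasDerivAt_rpow_const (p := 2+r) (Or.inl hx.ne')).const_mul (2/(2+r)))).sub_const
        (Ccoef r q)
  have hr1' : (1:ℝ) - r ≠ 0 := by linarith
  have hr2' : (2:ℝ) - r ≠ 0 := by linarith
  have hr2'' : (2:ℝ) + r ≠ 0 := by linarith
  have hv : g'' η = (1-q) * x ^ (1-2*r) - (3-q) * x ^ (1-r) + 3*x - x ^ (1+r) := by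
    rw [hODE2 η hη, hFder.deriv,
      show (2-2*r-1 : ℝ) = 1-2*r by ring, show (2-r-1 : ℝ) = 1-r by ring,
      show ((2:ℝ)-1 : ℝ) = 1 by ring, show (2+r-1 : ℝ) = 1+r by ring, Real.rpow_one]
    field_simp
  -- power relations
  have hrw : 1 - W η = x ^ r := by simp only [hW]; ring
  have hWval : W η = 1 - x ^ r := by simp only [hW]; rfl
  have mp : ∀ s t : ℝ, x ^ s * x ^ t = x ^ (s+t) := fun s t =>
    (Real.rpow_add hx s t).symm
  have h1 : x ^ r * x ^ (r-1) * x ^ (1-2*r) = 1 := by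
    rw [mp, mp, show r + (r-1) + (1-2*r) = 0 by ring, Real.rpow_zero]
  have h2 : x ^ r * x ^ (r-1) * x ^ (1-r) = x ^ r := by
    rw [mp, mp, show r + (r-1) + (1-r) = r by ring]
  have h3 : x ^ r * x ^ (r-1) * x = x ^ r * x ^ r := by
    rw [mp, ← Real.rpow_add_one hx.ne', show r + (r-1) + 1 = r + r by ring, ← mp]
  have h4 : x ^ r * x ^ (r-1) * x ^ (1+r) = x ^ r * (x ^ r * x ^ r) := by
    rw [mp, mp, mp, mp, show r + (r-1) + (1+r) = r + (r + r) by ring]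
  have h5 : x ^ r * x ^ (r-2) = x ^ (r-1) * x ^ (r-1) := by
    rw [mp, mp, show r + (r-2) = (r-1) + (r-1) by ring]
  rw [hrw, hW'', hderivW η hη, hv, hWval]
  have hrhs : (1-r)/r * (-(r * x ^ (r-1) * g' η))^2
      = (1-r)*r*(x^(r-1)*g' η)^2 := by
    field_simp
  rw [hrhs]
  linear_combination (-(r*(r-1)*(g' η)^2)) * h5 + (-(r*(1-q))) * h1 + (r*(3-q)) * h2
    + (-(3*r)) * h3 + r * h4
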